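/- (Lemma on non-degeneracy of linear ODEs with symmetric coefficient, Lemma 5 of the paper) Let z, q ∈ C¹([0,T]; ℝᵈ) and A, B ∈ C([0,T]; ℝ^{d×d}) satisfy ż(t) = -A(t)q(t) - B(t)z(t). Suppose there exist constants C, θ > 0 such that |z(t)|, |q(t)| ≤ C, z(t)·q(t) ≤ C|z(t)|² for all t, |A(t)|, |B(t)| ≤ C, A(t) ≥ θI (A symmetric positive definite with smallest eigenvalue ≥ θ), and A is Lipschitz in t with constant C. Then there exists a constant C₁ > 0, depending only on C, θ, T, such that |z(t)| ≥ C₁|z(0)| for all t ∈ [0,T]. -/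

import Mathlib

open Set Filter Topology

set_option maxHeartbeats 1000000 in
/-- Lemma 5 of the paper: non-degeneracy of a linear ODE
`ż = -A q - B z` with `A` symmetric, uniformly positive definite, bounded
and Lipschitz in time, under the bounds `|z| , |q| ≤ C`, `z·q ≤ C|z|²`.
Then `|z(t)| ≥ C₁ |z(0)|` on `[0,T]`. -/
theorem stmt_5 {d : ℕ} (T C θ : ℝ) (hT : 0 < T) (hC : 0 < C) (hθ : 0 < θ)
    (z q : ℝ → EuclideanSpace ℝ (Fin d))
    (A B : ℝ → EuclideanSpace ℝ (Fin d) →L[ℝ] EuclideanSpace ℝ (Fin d))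
    (hAcont : Continuous A) (hBcont : Continuous B)
    (hzC1 : ∀ t, HasDerivAt z (-(A t (q t)) - B t (z t)) t)
    (hqC1 : ∀ t, DifferentiableAt ℝ q t)
    (hzbd : ∀ t ∈ Icc 0 T, ‖z t‖ ≤ C)
    (hqbd : ∀ t ∈ Icc 0 T, ‖q t‖ ≤ C)
    (hzq : ∀ t ∈ Icc 0 T, (inner ℝ (z t) (q t) : ℝ) ≤ C * ‖z t‖ ^ 2)
    (hAbd : ∀ t ∈ Icc 0 T, ‖A t‖ ≤ C)
    (hBbd : ∀ t ∈ Icc 0 T, ‖B t‖ ≤ C)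
    (hAsymm : ∀ t ∈ Icc 0 T, ∀ v w, (inner ℝ (A t v) w : ℝ) = inner ℝ v (A t w))
    (hApos : ∀ t ∈ Icc 0 T, ∀ v, θ * ‖v‖ ^ 2 ≤ (inner ℝ v (A t v) : ℝ))
    (hAlip : ∀ t₁ ∈ Icc 0 T, ∀ t₂ ∈ Icc 0 T, ‖A t₂ - A t₁‖ ≤ C * |t₂ - t₁|) :
    ∃ C₁ > 0, ∀ t ∈ Icc 0 T, C₁ * ‖z 0‖ ≤ ‖z t‖ := by
  classical
  have hT0 : (0:ℝ) ∈ Icc 0 T := ⟨le_refl 0, hT.le⟩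
  -- construct the inverse of `A t`
  have hinv : ∀ t : ℝ, ∃ N : EuclideanSpace ℝ (Fin d) →L[ℝ] EuclideanSpace ℝ (Fin d),
      t ∈ Icc 0 T → (∀ v, A t (N v) = v) ∧ (∀ v, N (A t v) = v) := by
    intro t
    by_cases ht : t ∈ Icc 0 T
    · have hinj : Function.Injective (A t) := by
        intro v w hvw
        have h0 : (A t) (v - w) = 0 := by rw [map_sub, hvw, sub_self]
        have h1 := hApos t ht (v - w)
        rw [h0, inner_zero_right] at h1
        have h2 : ‖v - w‖ = 0 := by
          by_contra hne
          have hpos : 0 < ‖v - w‖ := lt_of_le_of_ne (norm_nonneg _) (Ne.symm hne)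
          nlinarith [h1, mul_pos hθ (mul_pos hpos hpos)]
        have : v - w = 0 := norm_eq_zero.mp h2
        exact sub_eq_zero.mp this
      have hsurj : Function.Surjective
          ((A t : EuclideanSpace ℝ (Fin d) →ₗ[ℝ] EuclideanSpace ℝ (Fin d))) :=
        LinearMap.injective_iff_surjective.mp hinj
      set e := LinearEquiv.ofBijective
        ((A t : EuclideanSpace ℝ (Fin d) →ₗ[ℝ] EuclideanSpace ℝ (Fin d))) ⟨hinj, hsurj⟩ with he
      refine ⟨LinearMap.toContinuousLinearMap (e.symm : EuclideanSpace ℝ (Fin d) →ₗ[ℝ]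
        EuclideanSpace ℝ (Fin d)), fun _ => ⟨fun v => ?_, fun v => ?_⟩⟩
      · exact e.apply_symm_apply v
      · exact e.symm_apply_apply v
    · exact ⟨0, fun h => absurd h ht⟩
  choose N hN using hinv
  have hAN : ∀ t ∈ Icc 0 T, ∀ v, A t (N t v) = v := fun t ht => (hN t ht).1
  have hNA : ∀ t ∈ Icc 0 T, ∀ v, N t (A t v) = v := fun t ht => (hN t ht).2
  -- norm bound on the inverse
  have hNnorm : ∀ t ∈ Icc 0 T, ∀ v, ‖N t v‖ ≤ ‖v‖ / θ := by
    intro t ht v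
    have h1 := hApos t ht (N t v)
    rw [hAN t ht v] at h1
    have h2 : (inner ℝ (N t v) v : ℝ) ≤ ‖N t v‖ * ‖v‖ := real_inner_le_norm _ _
    rcases eq_or_lt_of_le (norm_nonneg (N t v)) with h | h
    · rw [← h]; positivity
    · rw [le_div_iff₀ hθ]
      nlinarith
  -- symmetry of the inverse
  have hNsymm : ∀ t ∈ Icc 0 T, ∀ v w, (inner ℝ (N t v) w : ℝ) = inner ℝ v (N t w) := by
    intro t ht v w
    conv_lhs => rw [← hAN t ht w]
    rw [← hAsymm t ht (N t v) (N t w), hAN t ht v]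
  -- Lipschitz bound on the inverse
  have hNlip : ∀ s ∈ Icc 0 T, ∀ t ∈ Icc 0 T, ∀ v,
      ‖N t v - N s v‖ ≤ C / θ ^ 2 * |t - s| * ‖v‖ := by
    intro s hs t ht v
    have key : N t v - N s v = N t ((A s - A t) (N s v)) := by
      rw [ContinuousLinearMap.sub_apply, map_sub, hAN s hs v, hNA t ht (N s v)]
    have h0 : ‖A s - A t‖ ≤ C * |t - s| := by
      have := hAlip t ht s hs
      rwa [abs_sub_comm] at this
    have h1 : ‖(A s - A t) (N s v)‖ ≤ C * |t - s| * (‖v‖ / θ) :=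
      le_trans ((A s - A t).le_opNorm _)
        (mul_le_mul h0 (hNnorm s hs v) (norm_nonneg _) (by positivity))
    rw [key]
    calc ‖N t ((A s - A t) (N s v))‖ ≤ ‖(A s - A t) (N s v)‖ / θ := hNnorm t ht _
      _ ≤ C * |t - s| * (‖v‖ / θ) / θ := by gcongr ?_ / θ
      _ = C / θ ^ 2 * |t - s| * ‖v‖ := by ring
  -- lower and upper bounds of the quadratic form of the inverse
  have hglb : ∀ t ∈ Icc 0 T, ∀ v, θ / C ^ 2 * ‖v‖ ^ 2 ≤ (inner ℝ v (N t v) : ℝ) := by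
    intro t ht v
    have h1 := hApos t ht (N t v)
    rw [hAN t ht v] at h1
    have h2 : ‖v‖ ≤ C * ‖N t v‖ := by
      conv_lhs => rw [← hAN t ht v]
      exact le_trans ((A t).le_opNorm _)
        (mul_le_mul_of_nonneg_right (hAbd t ht) (norm_nonneg _))
    rw [real_inner_comm]
    have hv2 : ‖v‖ ^ 2 ≤ C ^ 2 * ‖N t v‖ ^ 2 := by
      nlinarith [norm_nonneg v, norm_nonneg (N t v)]
    rw [div_mul_eq_mul_div, div_le_iff₀ (by positivity)]
    nlinarith
  have hgub : ∀ t ∈ Icc 0 T, ∀ v, (inner ℝ v (N t v) : ℝ) ≤ ‖v‖ ^ 2 / θ := by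
    intro t ht v
    calc (inner ℝ v (N t v) : ℝ) ≤ ‖v‖ * ‖N t v‖ := real_inner_le_norm _ _
      _ ≤ ‖v‖ * (‖v‖ / θ) := mul_le_mul_of_nonneg_left (hNnorm t ht v) (norm_nonneg _)
      _ = ‖v‖ ^ 2 / θ := by ring
  -- the derivative of z is bounded, hence z is Lipschitz on [0,T]
  have hz'bd : ∀ t ∈ Icc 0 T, ‖-(A t (q t)) - B t (z t)‖ ≤ 2 * C ^ 2 := by
    intro t ht
    have e : -(A t (q t)) - B t (z t) = -((A t (q t)) + B t (z t)) := by abel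
    rw [e, norm_neg]
    calc ‖A t (q t) + B t (z t)‖ ≤ ‖A t (q t)‖ + ‖B t (z t)‖ := norm_add_le _ _
      _ ≤ C * C + C * C := add_le_add
          (le_trans ((A t).le_opNorm _)
            (mul_le_mul (hAbd t ht) (hqbd t ht) (norm_nonneg _) hC.le))
          (le_trans ((B t).le_opNorm _)
            (mul_le_mul (hBbd t ht) (hzbd t ht) (norm_nonneg _) hC.le))
      _ = 2 * C ^ 2 := by ring
  have hzlip : ∀ s ∈ Icc 0 T, ∀ t ∈ Icc 0 T, ‖z t - z s‖ ≤ 2 * C ^ 2 * |t - s| := by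
    intro s hs t ht
    have := Convex.norm_image_sub_le_of_norm_hasDerivWithin_le
      (f := z) (f' := fun u => -(A u (q u)) - B u (z u)) (s := Icc 0 T)
      (fun u hu => (hzC1 u).hasDerivWithinAt) hz'bd (convex_Icc 0 T) hs ht
    simpa [Real.norm_eq_abs] using this
  -- the function g
  set g : ℝ → ℝ := fun t => (inner ℝ (z t) (N t (z t)) : ℝ) with hg
  have gdiff : ∀ s ∈ Icc 0 T, ∀ t ∈ Icc 0 T,
      |g t - g s| ≤ (4 * C ^ 3 / θ + C ^ 3 / θ ^ 2) * |t - s| := by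
    intro s hs t ht
    have hsplit : g t - g s = (inner ℝ (z t - z s) (N t (z t)) : ℝ)
        + (inner ℝ (z s) (N t (z t - z s)) : ℝ)
        + (inner ℝ (z s) (N t (z s) - N s (z s)) : ℝ) := by
      simp only [hg, inner_sub_left, inner_sub_right, map_sub]
      ring
    have b1 : |(inner ℝ (z t - z s) (N t (z t)) : ℝ)| ≤ (2 * C ^ 2 * |t - s|) * (C / θ) := by
      refine le_trans (abs_real_inner_le_norm _ _) ?_
      have n1 : ‖N t (z t)‖ ≤ C / θ := by
        refine le_trans (hNnorm t ht _) ?_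
        gcongr
        exact hzbd t ht
      exact mul_le_mul (hzlip s hs t ht) n1 (norm_nonneg _) (by positivity)
    have b2 : |(inner ℝ (z s) (N t (z t - z s)) : ℝ)| ≤ C * (2 * C ^ 2 * |t - s| / θ) := by
      refine le_trans (abs_real_inner_le_norm _ _) ?_
      refine mul_le_mul (hzbd s hs) (le_trans (hNnorm t ht _) ?_) (norm_nonneg _) hC.le
      gcongr
      exact hzlip s hs t ht
    have b3 : |(inner ℝ (z s) (N t (z s) - N s (z s)) : ℝ)| ≤ C * (C / θ ^ 2 * |t - s| * C) := by
      refine le_trans (abs_real_inner_le_norm _ _) ?_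
      refine mul_le_mul (hzbd s hs) ?_ (norm_nonneg _) hC.le
      calc ‖N t (z s) - N s (z s)‖ ≤ C / θ ^ 2 * |t - s| * ‖z s‖ := hNlip s hs t ht (z s)
        _ ≤ C / θ ^ 2 * |t - s| * C := by
            gcongr
            exact hzbd s hs
    calc |g t - g s| = |(inner ℝ (z t - z s) (N t (z t)) : ℝ)
          + (inner ℝ (z s) (N t (z t - z s)) : ℝ)
          + (inner ℝ (z s) (N t (z s) - N s (z s)) : ℝ)| := by rw [hsplit]
      _ ≤ |(inner ℝ (z t - z s) (N t (z t)) : ℝ) + (inner ℝ (z s) (N t (z t - z s)) : ℝ)|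
          + |(inner ℝ (z s) (N t (z s) - N s (z s)) : ℝ)| := abs_add_le _ _
      _ ≤ |(inner ℝ (z t - z s) (N t (z t)) : ℝ)| + |(inner ℝ (z s) (N t (z t - z s)) : ℝ)|
          + |(inner ℝ (z s) (N t (z s) - N s (z s)) : ℝ)| := by
            gcongr
            exact abs_add_le _ _
      _ ≤ (2 * C ^ 2 * |t - s|) * (C / θ) + C * (2 * C ^ 2 * |t - s| / θ)
          + C * (C / θ ^ 2 * |t - s| * C) := add_le_add (add_le_add b1 b2) b3
      _ = (4 * C ^ 3 / θ + C ^ 3 / θ ^ 2) * |t - s| := by field_simp; ring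
  have gcont : ContinuousOn g (Icc 0 T) := by
    have glip : LipschitzOnWith (Real.toNNReal (4 * C ^ 3 / θ + C ^ 3 / θ ^ 2)) g (Icc 0 T) := by
      apply LipschitzOnWith.of_dist_le_mul
      intro s hs t ht
      rw [Real.dist_eq, Real.dist_eq]
      calc |g s - g t| ≤ (4 * C ^ 3 / θ + C ^ 3 / θ ^ 2) * |s - t| := gdiff t ht s hs
        _ ≤ (Real.toNNReal (4 * C ^ 3 / θ + C ^ 3 / θ ^ 2) : ℝ) * |s - t| := by
            gcongr
            exact Real.le_coe_toNNReal _
    exact glip.continuousOn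
  -- constants
  set K2 : ℝ := 2 * C + 2 * C / θ + C / θ ^ 2 with hK2
  have hK2pos : 0 < K2 := by rw [hK2]; positivity
  set K : ℝ := K2 * C ^ 2 / θ with hK
  have hKpos : 0 < K := by rw [hK]; positivity
  set F : ℝ → ℝ := fun x => 2 * (inner ℝ (z x) (q x) : ℝ)
    + 2 * (inner ℝ (N x (z x)) (B x (z x)) : ℝ) + C / θ ^ 2 * ‖z x‖ ^ 2 with hF
  have hFle : ∀ x ∈ Icc 0 T, F x ≤ K * g x := by
    intro x hx
    have h1 : (inner ℝ (z x) (q x) : ℝ) ≤ C * ‖z x‖ ^ 2 := hzq x hx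
    have h2 : (inner ℝ (N x (z x)) (B x (z x)) : ℝ) ≤ C / θ * ‖z x‖ ^ 2 := by
      calc (inner ℝ (N x (z x)) (B x (z x)) : ℝ) ≤ ‖N x (z x)‖ * ‖B x (z x)‖ :=
            real_inner_le_norm _ _
        _ ≤ (‖z x‖ / θ) * (C * ‖z x‖) := mul_le_mul (hNnorm x hx _)
            (le_trans ((B x).le_opNorm _)
              (mul_le_mul_of_nonneg_right (hBbd x hx) (norm_nonneg _)))
            (norm_nonneg _) (by positivity)
        _ = C / θ * ‖z x‖ ^ 2 := by ring
    have h3 : θ * ‖z x‖ ^ 2 ≤ C ^ 2 * g x := by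
      have h := hglb x hx (z x)
      have hC2 : (0:ℝ) < C ^ 2 := by positivity
      have h' := mul_le_mul_of_nonneg_left h hC2.le
      have e : C ^ 2 * (θ / C ^ 2 * ‖z x‖ ^ 2) = θ * ‖z x‖ ^ 2 := by
        field_simp
      rw [e] at h'
      exact h'
    have h4 : F x ≤ K2 * ‖z x‖ ^ 2 := by
      simp only [hF, hK2]
      ring_nf
      ring_nf at h1 h2
      linarith
    calc F x ≤ K2 * ‖z x‖ ^ 2 := h4
      _ ≤ K * g x := by
        rw [hK]
        rw [div_mul_eq_mul_div, le_div_iff₀ hθ]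
        nlinarith [h3, hK2pos.le]
  -- the key differential inequality via the fencing lemma
  have key : ∀ ε : ℝ, 0 < ε → ∀ t ∈ Icc 0 T, g 0 * Real.exp (-K * t) - ε ≤ g t := by
    intro ε hε
    have hfcont : ContinuousOn (fun t => -g t) (Icc 0 T) := gcont.neg
    have ha : (fun t => -g t) 0 ≤ ε - g 0 * Real.exp (-K * 0) := by
      simp only [mul_zero, Real.exp_zero]
      simp
      linarith
    have hB : ∀ x : ℝ, HasDerivAt (fun t => ε - g 0 * Real.exp (-K * t))
        (K * (g 0 * Real.exp (-K * x))) x := by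
      intro x
      have h1 : HasDerivAt (fun t : ℝ => -K * t) (-K) x := by
        simpa using (hasDerivAt_id x).const_mul (-K)
      have h2 := h1.exp
      have h3 := h2.const_mul (g 0)
      have h4 := (hasDerivAt_const x ε).sub h3
      exact h4.congr_deriv (by ring)
    have hbound : ∀ x ∈ Ico 0 T, (fun t => -g t) x = ε - g 0 * Real.exp (-K * x) →
        F x < K * (g 0 * Real.exp (-K * x)) := by
      intro x hx hgx
      simp only at hgx
      have h1 : g x = g 0 * Real.exp (-K * x) - ε := by linarith
      have h2 := hFle x (Ico_subset_Icc_self hx)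
      rw [h1] at h2
      have h3 := mul_pos hKpos hε
      nlinarith
    have hf' : ∀ x ∈ Ico 0 T, ∀ r, F x < r →
        ∃ᶠ y in 𝓝[>] x, slope (fun t => -g t) x y < r := by
      intro x hx r hr
      have hxI : x ∈ Icc 0 T := Ico_subset_Icc_self hx
      set z' : EuclideanSpace ℝ (Fin d) := -(A x (q x)) - B x (z x) with hz'
      set ψ : ℝ → ℝ := fun y => (inner ℝ (z y) (N x (z y)) : ℝ) with hψ
      have hNz : HasDerivAt (fun y => N x (z y)) (N x z') x :=
        ((N x).hasFDerivAt).comp_hasDerivAt x (hzC1 x)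
      have hψd : HasDerivAt ψ ((inner ℝ (z x) (N x z') : ℝ) + (inner ℝ z' (N x (z x)) : ℝ)) x :=
        (hzC1 x).inner ℝ hNz
      have hDeq : (inner ℝ (z x) (N x z') : ℝ) + (inner ℝ z' (N x (z x)) : ℝ)
          = -(2 * (inner ℝ (z x) (q x) : ℝ) + 2 * (inner ℝ (N x (z x)) (B x (z x)) : ℝ)) := by
        have e1 : (inner ℝ (z x) (N x z') : ℝ) = inner ℝ (N x (z x)) z' :=
          (hNsymm x hxI (z x) z').symm
        have e2 : (inner ℝ z' (N x (z x)) : ℝ) = inner ℝ (N x (z x)) z' := real_inner_comm _ _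
        rw [e1, e2, hz']
        rw [inner_sub_right, inner_neg_right]
        have e3 : (inner ℝ (N x (z x)) (A x (q x)) : ℝ) = inner ℝ (z x) (q x) := by
          rw [hNsymm x hxI (z x) (A x (q x)), hNA x hxI (q x)]
        rw [e3]
        ring
      have hr' : 2 * (inner ℝ (z x) (q x) : ℝ) + 2 * (inner ℝ (N x (z x)) (B x (z x)) : ℝ)
          + C / θ ^ 2 * ‖z x‖ ^ 2 < r := by
        simp only [hF] at hr
        exact hr
      have t1 : Tendsto (slope ψ x) (𝓝[>] x)
          (𝓝 ((inner ℝ (z x) (N x z') : ℝ) + (inner ℝ z' (N x (z x)) : ℝ))) :=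
        (hasDerivAt_iff_tendsto_slope.mp hψd).mono_left
          (nhdsWithin_mono x (fun y hy => by simp only [Set.mem_compl_singleton_iff]; exact ne_of_gt hy))
      have t2 : Tendsto (fun y => C / θ ^ 2 * ‖z y‖ ^ 2) (𝓝[>] x)
          (𝓝 (C / θ ^ 2 * ‖z x‖ ^ 2)) :=
        (Filter.Tendsto.const_mul _
          ((((hzC1 x).continuousAt.norm).pow 2).mono_left nhdsWithin_le_nhds))
      have hlim : Tendsto (fun y => -slope ψ x y + C / θ ^ 2 * ‖z y‖ ^ 2) (𝓝[>] x)
          (𝓝 (2 * (inner ℝ (z x) (q x) : ℝ) + 2 * (inner ℝ (N x (z x)) (B x (z x)) : ℝ)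
            + C / θ ^ 2 * ‖z x‖ ^ 2)) := by
        have t3 := t1.neg.add t2
        rw [hDeq] at t3
        convert t3 using 2
        ring
      have hev1 : ∀ᶠ y in 𝓝[>] x, -slope ψ x y + C / θ ^ 2 * ‖z y‖ ^ 2 < r :=
        hlim.eventually_lt_const hr'
      have hev2 : ∀ᶠ y in 𝓝[>] x, y ∈ Ioc x T := Ioc_mem_nhdsGT_of_mem ⟨le_rfl, hx.2⟩
      refine ((hev1.and hev2).mono ?_).frequently
      rintro y ⟨hlt, hyI⟩
      have hxy : 0 < y - x := sub_pos.mpr hyI.1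
      have hyIcc : y ∈ Icc 0 T := ⟨le_trans hx.1 hyI.1.le, hyI.2⟩
      have hgψ : ψ x = g x := rfl
      have hdiff : ψ y - g y ≤ C / θ ^ 2 * ‖z y‖ ^ 2 * (y - x) := by
        have e : ψ y - g y = (inner ℝ (z y) (N x (z y) - N y (z y)) : ℝ) := by
          simp only [hψ, hg, inner_sub_right]
        rw [e]
        calc (inner ℝ (z y) (N x (z y) - N y (z y)) : ℝ) ≤ ‖z y‖ * ‖N x (z y) - N y (z y)‖ :=
              real_inner_le_norm _ _
          _ ≤ ‖z y‖ * (C / θ ^ 2 * |x - y| * ‖z y‖) :=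
              mul_le_mul_of_nonneg_left (hNlip y hyIcc x hxI (z y)) (norm_nonneg _)
          _ = C / θ ^ 2 * ‖z y‖ ^ 2 * (y - x) := by
              rw [abs_sub_comm, abs_of_pos hxy]; ring
      have hsle : slope (fun t => -g t) x y ≤ -slope ψ x y + C / θ ^ 2 * ‖z y‖ ^ 2 := by
        rw [slope_def_field, slope_def_field]
        have key2 : -g y - -g x ≤ (ψ x - ψ y) + C / θ ^ 2 * ‖z y‖ ^ 2 * (y - x) := by
          linarith [hdiff]
        calc (-g y - -g x) / (y - x)
            ≤ ((ψ x - ψ y) + C / θ ^ 2 * ‖z y‖ ^ 2 * (y - x)) / (y - x) := by gcongr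
          _ = -((ψ y - ψ x) / (y - x)) + C / θ ^ 2 * ‖z y‖ ^ 2 := by
              field_simp [hxy.ne']
              ring
      exact lt_of_le_of_lt hsle hlt
    have main := image_le_of_liminf_slope_right_lt_deriv_boundary
      (f := fun t => -g t) (f' := F) (a := 0) (b := T)
      (B := fun t => ε - g 0 * Real.exp (-K * t))
      (B' := fun t => K * (g 0 * Real.exp (-K * t)))
      hfcont hf' ha hB hbound
    intro t ht
    have h := main ht
    linarith
  have hgge : ∀ t ∈ Icc 0 T, g 0 * Real.exp (-K * t) ≤ g t := fun t ht =>
    le_of_forall_sub_le fun ε hε => key ε hε t ht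
  -- conclusion
  refine ⟨θ / C * Real.exp (-K * T / 2), by positivity, ?_⟩
  intro t ht
  have h1 : θ * g t ≤ ‖z t‖ ^ 2 := by
    have h := hgub t ht (z t)
    rw [le_div_iff₀ hθ] at h
    linarith
  have h2 : θ / C ^ 2 * ‖z 0‖ ^ 2 * Real.exp (-K * t) ≤ g 0 * Real.exp (-K * t) :=
    mul_le_mul_of_nonneg_right (hglb 0 hT0 (z 0)) (Real.exp_nonneg _)
  have h3 : Real.exp (-K * T) ≤ Real.exp (-K * t) :=
    Real.exp_le_exp.mpr (by nlinarith [ht.2, hKpos])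
  have eexp : Real.exp (-K * T / 2) * Real.exp (-K * T / 2) = Real.exp (-K * T) := by
    rw [← Real.exp_add]; congr 1; ring
  have h4 : (θ / C * Real.exp (-K * T / 2) * ‖z 0‖) ^ 2 ≤ ‖z t‖ ^ 2 := by
    calc (θ / C * Real.exp (-K * T / 2) * ‖z 0‖) ^ 2
        = θ * (θ / C ^ 2 * ‖z 0‖ ^ 2) * Real.exp (-K * T) := by rw [← eexp]; ring
      _ ≤ θ * (θ / C ^ 2 * ‖z 0‖ ^ 2) * Real.exp (-K * t) := by
          apply mul_le_mul_of_nonneg_left h3 (by positivity)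
      _ = θ * (θ / C ^ 2 * ‖z 0‖ ^ 2 * Real.exp (-K * t)) := by ring
      _ ≤ θ * (g 0 * Real.exp (-K * t)) := mul_le_mul_of_nonneg_left h2 hθ.le
      _ ≤ θ * g t := mul_le_mul_of_nonneg_left (hgge t ht) hθ.le
      _ ≤ ‖z t‖ ^ 2 := h1
  have hnn : 0 ≤ θ / C * Real.exp (-K * T / 2) * ‖z 0‖ := by positivity
  calc θ / C * Real.exp (-K * T / 2) * ‖z 0‖
      = Real.sqrt ((θ / C * Real.exp (-K * T / 2) * ‖z 0‖) ^ 2) := (Real.sqrt_sq hnn).symm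
    _ ≤ Real.sqrt (‖z t‖ ^ 2) := Real.sqrt_le_sqrt h4
    _ = ‖z t‖ := Real.sqrt_sq (norm_nonneg _)
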